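/- Let G : ℍ^{N×S} → ℍ^{M×P} be ℝ-differentiable at Q ∈ ℍ^{N×S}, let F : ℍ^{M×P} → ℍ^{R×T} be ℝ-differentiable at G(Q), set H(Q) := F(G(Q)), and let μ ∈ ℍ, μ ≠ 0. Then D_{Q^{μ*}}H(Q) = Σ_{ν∈{1,i,j,k}} (D_{X^{ν*}}F)(G(Q)) · (D_{Q^{μ*}}G^{ν*})(Q), where G^{ν*} denotes the function Q ↦ ((G(Q))^ν)* (entrywise involution x^ν = νxν⁻¹ followed by entrywise conjugation) and (D_{X^{ν*}}F)(G(Q)) is the GHR Jacobian of F with respect to the conjugated ν-rotation of its matrix argument, evaluated at G(Q). -/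

import Mathlib

open scoped Quaternion

noncomputable section

/-- The imaginary unit `i` of the quaternions. -/
def qI : ℍ[ℝ] := ⟨0, 1, 0, 0⟩
/-- The imaginary unit `j` of the quaternions. -/
def qJ : ℍ[ℝ] := ⟨0, 0, 1, 0⟩
/-- The imaginary unit `k` of the quaternions. -/
def qK : ℍ[ℝ] := ⟨0, 0, 0, 1⟩

/-- The `N × S` quaternion matrix with entry `d` at position `(n,s)` and `0` elsewhere. -/
def single {N S : ℕ} (n : Fin N) (s : Fin S) (d : ℍ[ℝ]) : Fin N → Fin S → ℍ[ℝ] :=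
  Pi.single n (Pi.single s d)

/-- Real directional (Fréchet) derivative of a scalar function of a matrix variable, in the
direction `d` at the single entry `(n,s)` (the other entries held fixed). -/
def pd {N S : ℕ} (f : (Fin N → Fin S → ℍ[ℝ]) → ℍ[ℝ]) (Q : Fin N → Fin S → ℍ[ℝ])
    (n : Fin N) (s : Fin S) (d : ℍ[ℝ]) : ℍ[ℝ] :=
  fderiv ℝ f Q (single n s d)

/-- Left GHR derivative `∂f/∂q_{ns}^{μ*}` of a scalar function `f` with respect to the entry
`q_{ns}` of its matrix argument:
`¼(∂f/∂q_a + (∂f/∂q_b) i^μ + (∂f/∂q_c) j^μ + (∂f/∂q_d) k^μ)`, with `x^μ = μ x μ⁻¹`. -/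
def ghrEStar {N S : ℕ} (μ : ℍ[ℝ]) (f : (Fin N → Fin S → ℍ[ℝ]) → ℍ[ℝ])
    (Q : Fin N → Fin S → ℍ[ℝ]) (n : Fin N) (s : Fin S) : ℍ[ℝ] :=
  (1 / 4 : ℝ) • (pd f Q n s 1 + pd f Q n s qI * (μ * qI * μ⁻¹)
    + pd f Q n s qJ * (μ * qJ * μ⁻¹) + pd f Q n s qK * (μ * qK * μ⁻¹))

/-- The conjugate GHR Jacobian `D_{Q^{μ*}}F(Q)`: the `MP × NS` quaternion matrix whose
`((m,p),(n,s))` entry is `∂F_{mp}/∂q_{ns}^{μ*}`. -/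
def ghrJacStar {N S M P : ℕ} (μ : ℍ[ℝ])
    (F : (Fin N → Fin S → ℍ[ℝ]) → (Fin M → Fin P → ℍ[ℝ]))
    (Q : Fin N → Fin S → ℍ[ℝ]) : Matrix (Fin M × Fin P) (Fin N × Fin S) ℍ[ℝ] :=
  Matrix.of fun mp ns => ghrEStar μ (fun X => F X mp.1 mp.2) Q ns.1 ns.2

/-- Entrywise conjugated quaternion rotation `x ↦ (ν x ν⁻¹)*` of a matrix. -/
def rotStarM {M P : ℕ} (ν : ℍ[ℝ]) (A : Fin M → Fin P → ℍ[ℝ]) : Fin M → Fin P → ℍ[ℝ] :=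
  fun m p => star (ν * A m p * ν⁻¹)

/-! ### Auxiliary lemmas -/

lemma qI_inv : qI⁻¹ = -qI := by apply inv_eq_of_mul_eq_one_left; ext <;> simp [Quaternion.re_mul, Quaternion.imI_mul, Quaternion.imJ_mul, Quaternion.imK_mul] <;> simp [qI]
lemma qJ_inv : qJ⁻¹ = -qJ := by apply inv_eq_of_mul_eq_one_left; ext <;> simp [Quaternion.re_mul, Quaternion.imI_mul, Quaternion.imJ_mul, Quaternion.imK_mul] <;> simp [qJ]
lemma qK_inv : qK⁻¹ = -qK := by apply inv_eq_of_mul_eq_one_left; ext <;> simp [Quaternion.re_mul, Quaternion.imI_mul, Quaternion.imJ_mul, Quaternion.imK_mul] <;> simp [qK]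

lemma sOne (h : ℍ[ℝ]) : star ((1:ℍ[ℝ]) * h * (1:ℍ[ℝ])⁻¹) = ⟨h.re, -h.imI, -h.imJ, -h.imK⟩ := by
  ext <;> simp
lemma sI (h : ℍ[ℝ]) : star (qI * h * qI⁻¹) = ⟨h.re, -h.imI, h.imJ, h.imK⟩ := by
  rw [qI_inv]; ext <;> simp [Quaternion.re_mul, Quaternion.imI_mul, Quaternion.imJ_mul,
    Quaternion.imK_mul] <;> simp [qI]
lemma sJ (h : ℍ[ℝ]) : star (qJ * h * qJ⁻¹) = ⟨h.re, h.imI, -h.imJ, h.imK⟩ := by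
  rw [qJ_inv]; ext <;> simp [Quaternion.re_mul, Quaternion.imI_mul, Quaternion.imJ_mul,
    Quaternion.imK_mul] <;> simp [qJ]
lemma sK (h : ℍ[ℝ]) : star (qK * h * qK⁻¹) = ⟨h.re, h.imI, h.imJ, -h.imK⟩ := by
  rw [qK_inv]; ext <;> simp [Quaternion.re_mul, Quaternion.imI_mul, Quaternion.imJ_mul,
    Quaternion.imK_mul] <;> simp [qK]
lemma rII : qI * qI * qI⁻¹ = qI := by rw [qI_inv]; ext <;> simp [Quaternion.re_mul, Quaternion.imI_mul, Quaternion.imJ_mul, Quaternion.imK_mul] <;> simp [qI]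
lemma rIJ : qI * qJ * qI⁻¹ = -qJ := by rw [qI_inv]; ext <;> simp [Quaternion.re_mul, Quaternion.imI_mul, Quaternion.imJ_mul, Quaternion.imK_mul] <;> simp [qI, qJ]
lemma rIK : qI * qK * qI⁻¹ = -qK := by rw [qI_inv]; ext <;> simp [Quaternion.re_mul, Quaternion.imI_mul, Quaternion.imJ_mul, Quaternion.imK_mul] <;> simp [qI, qK]
lemma rJI : qJ * qI * qJ⁻¹ = -qI := by rw [qJ_inv]; ext <;> simp [Quaternion.re_mul, Quaternion.imI_mul, Quaternion.imJ_mul, Quaternion.imK_mul] <;> simp [qI, qJ]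
lemma rJJ : qJ * qJ * qJ⁻¹ = qJ := by rw [qJ_inv]; ext <;> simp [Quaternion.re_mul, Quaternion.imI_mul, Quaternion.imJ_mul, Quaternion.imK_mul] <;> simp [qJ]
lemma rJK : qJ * qK * qJ⁻¹ = -qK := by rw [qJ_inv]; ext <;> simp [Quaternion.re_mul, Quaternion.imI_mul, Quaternion.imJ_mul, Quaternion.imK_mul] <;> simp [qJ, qK]
lemma rKI : qK * qI * qK⁻¹ = -qI := by rw [qK_inv]; ext <;> simp [Quaternion.re_mul, Quaternion.imI_mul, Quaternion.imJ_mul, Quaternion.imK_mul] <;> simp [qI, qK]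
lemma rKJ : qK * qJ * qK⁻¹ = -qJ := by rw [qK_inv]; ext <;> simp [Quaternion.re_mul, Quaternion.imI_mul, Quaternion.imJ_mul, Quaternion.imK_mul] <;> simp [qJ, qK]
lemma rKK : qK * qK * qK⁻¹ = qK := by rw [qK_inv]; ext <;> simp [Quaternion.re_mul, Quaternion.imI_mul, Quaternion.imJ_mul, Quaternion.imK_mul] <;> simp [qK]

/-- Scalar GHR reconstruction identity: any real-linear expression in the components of `h`
is recovered from the four conjugate rotations of `h`. -/
lemma key (a b c d h : ℍ[ℝ]) :
    h.re • a + h.imI • b + h.imJ • c + h.imK • d =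
      ((1/4:ℝ) • (a + b * ((1:ℍ[ℝ]) * qI * (1:ℍ[ℝ])⁻¹) + c * ((1:ℍ[ℝ]) * qJ * (1:ℍ[ℝ])⁻¹)
          + d * ((1:ℍ[ℝ]) * qK * (1:ℍ[ℝ])⁻¹))) * star ((1:ℍ[ℝ]) * h * (1:ℍ[ℝ])⁻¹)
    + ((1/4:ℝ) • (a + b * (qI * qI * qI⁻¹) + c * (qI * qJ * qI⁻¹)
          + d * (qI * qK * qI⁻¹))) * star (qI * h * qI⁻¹)
    + ((1/4:ℝ) • (a + b * (qJ * qI * qJ⁻¹) + c * (qJ * qJ * qJ⁻¹)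
          + d * (qJ * qK * qJ⁻¹))) * star (qJ * h * qJ⁻¹)
    + ((1/4:ℝ) • (a + b * (qK * qI * qK⁻¹) + c * (qK * qJ * qK⁻¹)
          + d * (qK * qK * qK⁻¹))) * star (qK * h * qK⁻¹) := by
  rw [rII, rIJ, rIK, rJI, rJJ, rJK, rKI, rKJ, rKK]
  simp only [one_mul, mul_one, inv_one]
  ext <;>
    simp only [Quaternion.re_mul, Quaternion.imI_mul, Quaternion.imJ_mul,
      Quaternion.imK_mul, Quaternion.re_add, Quaternion.imI_add, Quaternion.imJ_add,
      Quaternion.imK_add, Quaternion.re_neg, Quaternion.imI_neg, Quaternion.imJ_neg,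
      Quaternion.imK_neg, Quaternion.re_smul, Quaternion.imI_smul, Quaternion.imJ_smul,
      Quaternion.imK_smul, smul_eq_mul] <;> simp only [sI, sJ, sK] <;>
      simp only [qI, qJ, qK, Quaternion.re_star, Quaternion.imI_star, Quaternion.imJ_star,
        Quaternion.imK_star] <;> ring

/-- Per-entry form of the chain rule identity. -/
lemma perEntry (a b c d c1 ci cj ck mi mj mk : ℍ[ℝ]) :
    (1/4:ℝ) • ((c1.re • a + c1.imI • b + c1.imJ • c + c1.imK • d)
      + (ci.re • a + ci.imI • b + ci.imJ • c + ci.imK • d) * mi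
      + (cj.re • a + cj.imI • b + cj.imJ • c + cj.imK • d) * mj
      + (ck.re • a + ck.imI • b + ck.imJ • c + ck.imK • d) * mk)
    = ((1/4:ℝ) • (a + b * ((1:ℍ[ℝ]) * qI * (1:ℍ[ℝ])⁻¹) + c * ((1:ℍ[ℝ]) * qJ * (1:ℍ[ℝ])⁻¹)
          + d * ((1:ℍ[ℝ]) * qK * (1:ℍ[ℝ])⁻¹)))
        * ((1/4:ℝ) • (star ((1:ℍ[ℝ]) * c1 * (1:ℍ[ℝ])⁻¹) + star ((1:ℍ[ℝ]) * ci * (1:ℍ[ℝ])⁻¹) * mi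
          + star ((1:ℍ[ℝ]) * cj * (1:ℍ[ℝ])⁻¹) * mj + star ((1:ℍ[ℝ]) * ck * (1:ℍ[ℝ])⁻¹) * mk))
    + ((1/4:ℝ) • (a + b * (qI * qI * qI⁻¹) + c * (qI * qJ * qI⁻¹) + d * (qI * qK * qI⁻¹)))
        * ((1/4:ℝ) • (star (qI * c1 * qI⁻¹) + star (qI * ci * qI⁻¹) * mi
          + star (qI * cj * qI⁻¹) * mj + star (qI * ck * qI⁻¹) * mk))
    + ((1/4:ℝ) • (a + b * (qJ * qI * qJ⁻¹) + c * (qJ * qJ * qJ⁻¹) + d * (qJ * qK * qJ⁻¹)))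
        * ((1/4:ℝ) • (star (qJ * c1 * qJ⁻¹) + star (qJ * ci * qJ⁻¹) * mi
          + star (qJ * cj * qJ⁻¹) * mj + star (qJ * ck * qJ⁻¹) * mk))
    + ((1/4:ℝ) • (a + b * (qK * qI * qK⁻¹) + c * (qK * qJ * qK⁻¹) + d * (qK * qK * qK⁻¹)))
        * ((1/4:ℝ) • (star (qK * c1 * qK⁻¹) + star (qK * ci * qK⁻¹) * mi
          + star (qK * cj * qK⁻¹) * mj + star (qK * ck * qK⁻¹) * mk)) := by
  rw [key a b c d c1, key a b c d ci, key a b c d cj, key a b c d ck]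
  simp only [mul_add, add_mul, smul_add, mul_smul_comm, smul_mul_assoc, smul_smul, mul_assoc]
  abel

lemma quat_decomp (h : ℍ[ℝ]) : h = h.re • 1 + h.imI • qI + h.imJ • qJ + h.imK • qK := by
  ext <;> simp [Quaternion.re_smul] <;> simp [qI, qJ, qK]

lemma matrix_eq_sum_single {M P : ℕ} (A : Fin M → Fin P → ℍ[ℝ]) :
    A = ∑ mp : Fin M × Fin P, single mp.1 mp.2 (A mp.1 mp.2) := by
  funext m p
  simp [single, Fintype.sum_prod_type, Finset.sum_apply, Pi.single_apply, ite_apply,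
    Finset.sum_ite_eq, Finset.sum_ite_eq']

lemma single_decomp {M P : ℕ} (m : Fin M) (p : Fin P) (h : ℍ[ℝ]) :
    single m p h = h.re • single m p 1 + h.imI • single m p qI
      + h.imJ • single m p qJ + h.imK • single m p qK := by
  conv_lhs => rw [quat_decomp h]
  simp [single, Pi.single_add, Pi.single_smul]

/-- Decomposition of an applied continuous-linear map through the entries of its argument. -/
lemma e_decomp {M P R T : ℕ} (D : (Fin M → Fin P → ℍ[ℝ]) →L[ℝ] (Fin R → Fin T → ℍ[ℝ]))
    (r : Fin R) (t : Fin T) (A : Fin M → Fin P → ℍ[ℝ]) :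
    D A r t = ∑ k : Fin M × Fin P,
      ((A k.1 k.2).re • D (single k.1 k.2 1) r t + (A k.1 k.2).imI • D (single k.1 k.2 qI) r t
        + (A k.1 k.2).imJ • D (single k.1 k.2 qJ) r t
        + (A k.1 k.2).imK • D (single k.1 k.2 qK) r t) := by
  conv_lhs => rw [matrix_eq_sum_single A, map_sum]
  rw [Finset.sum_apply, Finset.sum_apply]
  refine Finset.sum_congr rfl fun k _ => ?_
  rw [single_decomp, map_add, map_add, map_add, map_smul, map_smul, map_smul, map_smul]
  simp

/-- evaluation at an entry, as a CLM -/
def projE {M P : ℕ} (m : Fin M) (p : Fin P) : (Fin M → Fin P → ℍ[ℝ]) →L[ℝ] ℍ[ℝ] :=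
  (ContinuousLinearMap.proj (R := ℝ) (φ := fun _ : Fin P => ℍ[ℝ]) p).comp
    (ContinuousLinearMap.proj (R := ℝ) (φ := fun _ : Fin M => Fin P → ℍ[ℝ]) m)

/-- `x ↦ star (ν x ν⁻¹)` as a CLM -/
def rotC (ν : ℍ[ℝ]) : ℍ[ℝ] →L[ℝ] ℍ[ℝ] :=
  LinearMap.toContinuousLinearMap
    { toFun := fun x => star (ν * x * ν⁻¹)
      map_add' := by intro x y; simp [mul_add, add_mul]
      map_smul' := by
        intro r x
        simp [Algebra.mul_smul_comm, Algebra.smul_mul_assoc] }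

section PD
variable {N S M P R T : ℕ}
  (G : (Fin N → Fin S → ℍ[ℝ]) → (Fin M → Fin P → ℍ[ℝ]))
  (F : (Fin M → Fin P → ℍ[ℝ]) → (Fin R → Fin T → ℍ[ℝ]))
  (Q : Fin N → Fin S → ℍ[ℝ])

lemma pd_comp (hG : DifferentiableAt ℝ G Q) (hF : DifferentiableAt ℝ F (G Q))
    (r : Fin R) (t : Fin T) (n : Fin N) (s : Fin S) (d : ℍ[ℝ]) :
    pd (fun X => F (G X) r t) Q n s d
      = fderiv ℝ F (G Q) (fderiv ℝ G Q (single n s d)) r t := by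
  have h : HasFDerivAt (fun X => F (G X) r t)
      ((projE r t).comp ((fderiv ℝ F (G Q)).comp (fderiv ℝ G Q))) Q := by
    exact (projE r t).hasFDerivAt.comp Q (hF.hasFDerivAt.comp Q hG.hasFDerivAt)
  rw [pd, h.fderiv]; rfl

lemma pd_F (hF : DifferentiableAt ℝ F (G Q))
    (r : Fin R) (t : Fin T) (m : Fin M) (p : Fin P) (d : ℍ[ℝ]) :
    pd (fun X => F X r t) (G Q) m p d = fderiv ℝ F (G Q) (single m p d) r t := by
  have h : HasFDerivAt (fun X => F X r t) ((projE r t).comp (fderiv ℝ F (G Q))) (G Q) := by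
    exact (projE r t).hasFDerivAt.comp (G Q) hF.hasFDerivAt
  rw [pd, h.fderiv]; rfl

lemma pd_rot (hG : DifferentiableAt ℝ G Q) (ν : ℍ[ℝ])
    (m : Fin M) (p : Fin P) (n : Fin N) (s : Fin S) (d : ℍ[ℝ]) :
    pd (fun X => star (ν * G X m p * ν⁻¹)) Q n s d
      = star (ν * fderiv ℝ G Q (single n s d) m p * ν⁻¹) := by
  have h : HasFDerivAt (fun X => star (ν * G X m p * ν⁻¹))
      ((rotC ν).comp ((projE m p).comp (fderiv ℝ G Q))) Q := by
    exact (rotC ν).hasFDerivAt.comp Q ((projE m p).hasFDerivAt.comp Q hG.hasFDerivAt)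
  rw [pd, h.fderiv]; rfl

end PD

/-- **Conjugate GHR chain rule** (Theorem 2, conjugate identity):
`D_{Q^{μ*}}(F ∘ G)(Q) = Σ_{ν∈{1,i,j,k}} (D_{X^{ν*}}F)(G(Q)) · (D_{Q^{μ*}}G^{ν*})(Q)`. -/
theorem ghr_star_chain_rule {N S M P R T : ℕ} (μ : ℍ[ℝ]) (hμ : μ ≠ 0)
    (G : (Fin N → Fin S → ℍ[ℝ]) → (Fin M → Fin P → ℍ[ℝ]))
    (F : (Fin M → Fin P → ℍ[ℝ]) → (Fin R → Fin T → ℍ[ℝ]))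
    (Q : Fin N → Fin S → ℍ[ℝ])
    (hG : DifferentiableAt ℝ G Q) (hF : DifferentiableAt ℝ F (G Q)) :
    ghrJacStar μ (fun X => F (G X)) Q =
      ghrJacStar (1 : ℍ[ℝ]) F (G Q) * ghrJacStar μ (fun X => rotStarM (1 : ℍ[ℝ]) (G X)) Q
        + ghrJacStar qI F (G Q) * ghrJacStar μ (fun X => rotStarM qI (G X)) Q
        + ghrJacStar qJ F (G Q) * ghrJacStar μ (fun X => rotStarM qJ (G X)) Q
        + ghrJacStar qK F (G Q) * ghrJacStar μ (fun X => rotStarM qK (G X)) Q := by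
  refine Matrix.ext fun rt ns => ?_
  obtain ⟨r, t⟩ := rt
  obtain ⟨n, s⟩ := ns
  simp only [ghrJacStar, Matrix.add_apply, Matrix.mul_apply, Matrix.of_apply, ghrEStar,
    rotStarM]
  simp only [pd_comp G F Q hG hF, pd_F G F Q hF, pd_rot G Q hG]
  rw [e_decomp (fderiv ℝ F (G Q)) r t (fderiv ℝ G Q (single n s 1)),
    e_decomp (fderiv ℝ F (G Q)) r t (fderiv ℝ G Q (single n s qI)),
    e_decomp (fderiv ℝ F (G Q)) r t (fderiv ℝ G Q (single n s qJ)),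
    e_decomp (fderiv ℝ F (G Q)) r t (fderiv ℝ G Q (single n s qK))]
  rw [Finset.sum_mul, Finset.sum_mul, Finset.sum_mul]
  conv_lhs => rw [← Finset.sum_add_distrib, ← Finset.sum_add_distrib, ← Finset.sum_add_distrib,
    Finset.smul_sum]
  rw [← Finset.sum_add_distrib, ← Finset.sum_add_distrib, ← Finset.sum_add_distrib]
  refine Finset.sum_congr rfl fun k _ => ?_
  exact perEntry _ _ _ _ _ _ _ _ _ _ _
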